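/- arXiv:1208.1238 — 2 statements merged into one kernel-verified Lean document; each statement's English description precedes it below -/
import Mathlib

section
/- Let n ≥ 1, let μ = (-1)^n, and let Δ_n be the n×n complex matrix with (i,j) entry μ^i·(−μ)^{j−1}·C(j−1, n−i) for 1 ≤ i, j ≤ n. Then Δ_n is invertible and Δ_n⁻¹ · Δ_nᵀ = −J_n(μ)^n. -/
open Matrix BigOperators Finset

noncomputable section

/-- The `n × n` upper-triangular Jordan block with eigenvalue `μ`:
`μ` on the diagonal, `1` on the first superdiagonal, `0` elsewhere. -/
def Jmat (n : ℕ) (μ : ℂ) : Matrix (Fin n) (Fin n) ℂ :=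
  Matrix.of fun i j => if i = j then μ else if (j : ℕ) = (i : ℕ) + 1 then 1 else 0

/-- The Pascal-type matrix `Δ_n`, whose 1-based `(i,j)` entry is
`μ^i * (−μ)^(j−1) * C(j−1, n−i)` (here indices are 0-based, so shifted by one). -/
def Delta (n : ℕ) (μ : ℂ) : Matrix (Fin n) (Fin n) ℂ :=
  Matrix.of fun i j =>
    μ ^ ((i : ℕ) + 1) * (-μ) ^ (j : ℕ) * ((j : ℕ).choose (n - ((i : ℕ) + 1)) : ℂ)

/-- The `2n × 2n` block matrix `H_{2n}(μ) = [[0, I],[J_n(μ), 0]]`. -/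
def Hmat (n : ℕ) (μ : ℂ) : Matrix (Fin n ⊕ Fin n) (Fin n ⊕ Fin n) ℂ :=
  Matrix.fromBlocks 0 1 (Jmat n μ) 0

/-- The `n × n` reversed identity matrix: `1` on the antidiagonal, `0` elsewhere. -/
def Rev (n : ℕ) : Matrix (Fin n) (Fin n) ℂ :=
  Matrix.of fun i j => if j = i.rev then 1 else 0


def Fz (n m j : ℕ) : ℤ :=
  ∑ k ∈ Finset.range (j+1), (-1:ℤ)^k * (k.choose m) * (n.choose (j-k))

def Gz (n m j : ℕ) : ℤ :=
  if m ≤ j then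
    (if m < n then (-1:ℤ)^m * ((n-m-1).choose (j-m))
     else (-1:ℤ)^j * ((j-n).choose (j-m)))
  else 0

lemma Fz_def (n m j : ℕ) : Fz n m j =
    ∑ k ∈ Finset.range (j+1), (-1:ℤ)^k * (k.choose m) * (n.choose (j-k)) := rfl

lemma Gz_def (n m j : ℕ) : Gz n m j =
    (if m ≤ j then
      (if m < n then (-1:ℤ)^m * ((n-m-1).choose (j-m))
       else (-1:ℤ)^j * ((j-n).choose (j-m)))
    else 0) := rfl

lemma F_succ (n m j : ℕ) : Fz (n+1) m (j+1) = Fz n m (j+1) + Fz n m j := by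
  unfold Fz
  have h : ∀ k ∈ Finset.range (j+1),
      (-1:ℤ)^k * (k.choose m) * ((n+1).choose (j+1-k))
      = (-1:ℤ)^k * (k.choose m) * (n.choose (j+1-k))
        + (-1:ℤ)^k * (k.choose m) * (n.choose (j-k)) := by
    intro k hk
    simp only [Finset.mem_range] at hk
    have h1 : j + 1 - k = (j - k) + 1 := by omega
    rw [h1, Nat.choose_succ_succ]
    push_cast; ring
  rw [Finset.sum_range_succ ((fun k => (-1:ℤ)^k * (k.choose m) * ((n+1).choose (j+1-k)))),
    Finset.sum_range_succ (fun k => (-1:ℤ)^k * (k.choose m) * (n.choose (j+1-k))),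
    Finset.sum_congr rfl h, Finset.sum_add_distrib]
  simp only [Nat.sub_self, Nat.choose_zero_right, Nat.cast_one, mul_one]
  ring

lemma F_base (m j : ℕ) : Fz 0 m j = Gz 0 m j := by
  have h : Fz 0 m j = (-1:ℤ)^j * (j.choose m) := by
    unfold Fz
    rw [Finset.sum_eq_single j]
    · simp
    · intro k hk hne
      simp only [Finset.mem_range] at hk
      have : (0:ℕ).choose (j - k) = 0 := Nat.choose_eq_zero_of_lt (by omega)
      simp [this]
    · intro h; exact absurd (Finset.self_mem_range_succ j) h
  rw [h]
  unfold Gz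
  by_cases hmj : m ≤ j
  · rw [if_pos hmj, if_neg (by omega : ¬ m < 0), Nat.sub_zero, Nat.choose_symm hmj]
  · have : j.choose m = 0 := Nat.choose_eq_zero_of_lt (by omega)
    simp [hmj, this]

lemma F_eq_G (n : ℕ) : ∀ m j, Fz n m j = Gz n m j := by
  induction n with
  | zero => exact F_base
  | succ n ih =>
    intro m j
    cases j with
    | zero =>
      have h0 : Fz (n+1) m 0 = Fz n m 0 := by simp [Fz]
      rw [h0, ih m 0]
      unfold Gz
      by_cases hm : m = 0
      · subst hm
        by_cases hn : 0 < n <;> simp [hn]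
      · simp [hm, (by omega : ¬ m ≤ 0)]
    | succ j =>
      rw [F_succ, ih m (j+1), ih m j]
      unfold Gz
      by_cases h1 : m ≤ j + 1
      · by_cases h2 : m ≤ j
        · -- m ≤ j
          rcases lt_trichotomy m n with hmn | hmn | hmn
          · -- m < n, so m < n+1
            simp only [if_pos h1, if_pos h2, if_pos (by omega : m < n + 1), if_pos hmn]
            have e1 : n + 1 - m - 1 = (n - m - 1) + 1 := by omega
            have e2 : j + 1 - m = (j - m) + 1 := by omega
            rw [e1, e2, Nat.choose_succ_succ]
            simp only [Nat.succ_eq_add_one]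
            push_cast; ring
          · -- m = n
            subst hmn
            rw [if_pos h1, if_pos h2, if_pos (by omega : m < m + 1),
              if_neg (lt_irrefl m), if_neg (lt_irrefl m)]
            have e1 : m + 1 - m - 1 = 0 := by omega
            have e2 : (0:ℕ).choose (j+1-m) = 0 := Nat.choose_eq_zero_of_lt (by omega)
            have e3 : j + 1 - m = (j - m) + 1 := by omega
            rw [e1, e2]
            have e4 : (j+1-m : ℕ).choose (j+1-m) = 1 := Nat.choose_self _
            have e5 : (j-m : ℕ).choose (j-m) = 1 := Nat.choose_self _
            rw [e4, e5]
            push_cast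
            ring_nf
            simp [pow_succ]
          · -- n < m
            simp only [if_pos h1, if_pos h2, if_neg (by omega : ¬ m < n + 1),
              if_neg (by omega : ¬ m < n)]
            have e1 : j + 1 - (n+1) = j - n := by omega
            have e2 : j + 1 - n = (j - n) + 1 := by omega
            have e3 : j + 1 - m = (j - m) + 1 := by omega
            rw [e1, e2, e3, Nat.choose_succ_succ]
            simp only [Nat.succ_eq_add_one]
            push_cast; ring
        · -- m = j + 1
          have hm : m = j + 1 := by omega
          subst hm
          rw [if_pos h1, if_neg h2]
          by_cases hn : j + 1 < n
          · rw [if_pos (by omega : j + 1 < n + 1), if_pos hn]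
            simp
          · rw [if_neg hn]
            by_cases hn' : j + 1 < n + 1
            · rw [if_pos hn']
              have : n = j + 1 := by omega
              subst this
              simp
            · rw [if_neg hn']
              simp
      · simp only [if_neg h1, if_neg (by omega : ¬ m ≤ j)]
        simp

def Nmat (n : ℕ) : Matrix (Fin n) (Fin n) ℂ :=
  Matrix.of fun i j => if (j : ℕ) = (i : ℕ) + 1 then 1 else 0

lemma Npow (n t : ℕ) (i j : Fin n) :
    ((Nmat n) ^ t) i j = if (j : ℕ) = (i : ℕ) + t then 1 else 0 := by
  induction t generalizing j with
  | zero =>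
    simp [Matrix.one_apply, Fin.ext_iff, eq_comm]
  | succ t ih =>
    rw [pow_succ, Matrix.mul_apply]
    by_cases h : (i : ℕ) + t < n
    · set k0 : Fin n := ⟨(i : ℕ) + t, h⟩ with hk0
      rw [Finset.sum_eq_single k0]
      · rw [ih]
        simp [Nmat, hk0, add_assoc]
      · intro k _ hk
        rw [ih]
        have : ¬ ((k : ℕ) = (i : ℕ) + t) := fun hc => hk (Fin.ext hc)
        rw [if_neg this, zero_mul]
      · intro hc; exact absurd (Finset.mem_univ k0) hc
    · rw [Finset.sum_eq_zero, if_neg (by omega : ¬ ((j:ℕ) = (i:ℕ) + (t+1)))]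
      intro k _
      rw [ih, if_neg (by omega : ¬ ((k:ℕ) = (i:ℕ) + t)), zero_mul]

lemma Jmat_eq (n : ℕ) (μ : ℂ) : Jmat n μ = μ • 1 + Nmat n := by
  ext i j
  simp only [Jmat, Nmat, Matrix.add_apply, Matrix.smul_apply, Matrix.one_apply, Matrix.of_apply,
    smul_eq_mul]
  by_cases h : i = j
  · subst h
    rw [if_pos rfl, if_pos rfl, if_neg (by omega), mul_one, add_zero]
  · rw [if_neg h, if_neg h, mul_zero, zero_add]

lemma Jpow (n : ℕ) (μ : ℂ) (i j : Fin n) :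
    ((Jmat n μ) ^ n) i j =
      if (i : ℕ) ≤ (j : ℕ) then μ ^ (n - ((j:ℕ) - (i:ℕ))) * (n.choose ((j:ℕ) - (i:ℕ)) : ℂ)
      else 0 := by
  have hcomm : Commute (μ • (1 : Matrix (Fin n) (Fin n) ℂ)) (Nmat n) :=
    ((Commute.one_left (Nmat n)).smul_left μ)
  rw [Jmat_eq, hcomm.add_pow]
  rw [Matrix.sum_apply]
  have hterm : ∀ k, ((μ • (1 : Matrix (Fin n) (Fin n) ℂ)) ^ k * (Nmat n) ^ (n - k) *
      ((n.choose k : ℕ) : Matrix (Fin n) (Fin n) ℂ)) i j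
      = if (j : ℕ) = (i : ℕ) + (n - k) then μ ^ k * (n.choose k : ℂ) else 0 := by
    intro k
    rw [smul_pow, one_pow, Matrix.smul_mul, Matrix.smul_mul, Matrix.smul_apply, one_mul,
      ← Matrix.diagonal_natCast, Matrix.mul_diagonal, Npow]
    by_cases h : (j : ℕ) = (i : ℕ) + (n - k)
    · rw [if_pos h, if_pos h, one_mul, smul_eq_mul]
    · rw [if_neg h, if_neg h, zero_mul, smul_eq_mul, mul_zero]
  rw [Finset.sum_congr rfl (fun k _ => hterm k)]
  by_cases hij : (i : ℕ) ≤ (j : ℕ)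
  · rw [if_pos hij]
    have hjn := j.isLt
    have hin := i.isLt
    rw [Finset.sum_eq_single (n - ((j:ℕ) - (i:ℕ)))]
    · rw [if_pos (by omega)]
      congr 1
      rw [Nat.choose_symm (by omega)]
    · intro k hk hne
      simp only [Finset.mem_range] at hk
      rw [if_neg (by omega)]
    · intro hc
      simp only [Finset.mem_range, not_lt] at hc
      omega
  · rw [if_neg hij, Finset.sum_eq_zero]
    intro k hk
    simp only [Finset.mem_range] at hk
    rw [if_neg (by omega)]
lemma neg_one_pow_congr' (a b : ℕ) (h : a % 2 = b % 2) : ((-1:ℂ))^a = (-1)^b := by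
  conv_lhs => rw [← Nat.div_add_mod a 2]
  conv_rhs => rw [← Nat.div_add_mod b 2]
  rw [pow_add, pow_add, pow_mul, pow_mul, h, neg_one_sq, one_pow, one_pow]

lemma neg_neg_one_pow_congr (a b : ℕ) (h : (a+1) % 2 = b % 2) : -((-1:ℂ))^a = (-1)^b := by
  rw [← neg_one_pow_congr' (a+1) b h, pow_succ]; ring

lemma key (n : ℕ) (hn : 1 ≤ n) (μ : ℂ) (hμ : μ = (-1)^n) :
    Delta n μ * (-(Jmat n μ ^ n)) = (Delta n μ)ᵀ := by
  have hμ2 : μ ^ 2 = 1 := by rw [hμ, ← pow_mul, mul_comm, pow_mul]; simp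
  ext i j
  have hin := i.isLt
  have hjn := j.isLt
  set m := n - ((i:ℕ)+1) with hm
  rw [Matrix.mul_apply, Matrix.transpose_apply]
  have hterm : ∀ k : Fin n, Delta n μ i k * (-(Jmat n μ ^ n)) k j
      = (fun t : ℕ => if t ≤ (j:ℕ) then
          -(μ^((i:ℕ)+1) * μ^(n-(j:ℕ)) * ((-1:ℂ)^t * (t.choose m : ℂ) * ((n.choose ((j:ℕ)-t)) : ℂ)))
        else 0) (k:ℕ) := by
    intro k
    simp only [Matrix.neg_apply, Jpow, Delta, Matrix.of_apply]
    by_cases hk : (k:ℕ) ≤ (j:ℕ)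
    · rw [if_pos hk, if_pos hk]
      have h1 : n - ((j:ℕ) - (k:ℕ)) = (n - (j:ℕ)) + (k:ℕ) := by omega
      rw [h1, pow_add, neg_pow]
      have h2 : μ ^ (k:ℕ) * μ ^ (k:ℕ) = 1 := by
        rw [← pow_add, ← two_mul, pow_mul, hμ2, one_pow]
      linear_combination (-(μ^((i:ℕ)+1) * (-1:ℂ)^(k:ℕ) * ((k:ℕ).choose m : ℂ) *
        μ^(n-(j:ℕ)) * ((n.choose ((j:ℕ)-(k:ℕ))) : ℂ))) * h2
    · rw [if_neg hk, if_neg hk, neg_zero, mul_zero]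
  rw [Finset.sum_congr rfl (fun k _ => hterm k)]
  rw [Fin.sum_univ_eq_sum_range (fun t : ℕ => if t ≤ (j:ℕ) then
      -(μ^((i:ℕ)+1) * μ^(n-(j:ℕ)) * ((-1:ℂ)^t * (t.choose m : ℂ) * ((n.choose ((j:ℕ)-t)) : ℂ)))
    else 0) n]
  rw [← Finset.sum_subset (Finset.range_subset_range.mpr (by omega : (j:ℕ)+1 ≤ n))
      (fun x hx hx' => by
        rw [if_neg]
        simp only [Finset.mem_range] at hx hx'
        omega)]
  rw [Finset.sum_congr rfl (fun t ht => if_pos (by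
    simp only [Finset.mem_range] at ht; omega))]
  have hFsum : ∑ t ∈ Finset.range ((j:ℕ)+1),
      -(μ^((i:ℕ)+1) * μ^(n-(j:ℕ)) * ((-1:ℂ)^t * (t.choose m : ℂ) * ((n.choose ((j:ℕ)-t)) : ℂ)))
      = -(μ^((i:ℕ)+1) * μ^(n-(j:ℕ)) * ((Fz n m (j:ℕ) : ℤ) : ℂ)) := by
    rw [Fz_def]
    push_cast
    rw [Finset.sum_neg_distrib, neg_inj, Finset.mul_sum]
  rw [hFsum, F_eq_G, Gz_def]
  by_cases h1 : m ≤ (j:ℕ)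
  · have h2 : m < n := by omega
    rw [if_pos h1, if_pos h2]
    have e1 : n - m - 1 = (i:ℕ) := by omega
    have e2 : (j:ℕ) - m = (i:ℕ) - (n - ((j:ℕ)+1)) := by omega
    have e3 : n - ((j:ℕ)+1) ≤ (i:ℕ) := by omega
    rw [e1, e2, Nat.choose_symm e3]
    simp only [Delta, Matrix.of_apply]
    push_cast
    rw [neg_pow]
    have hsign : -(μ^((i:ℕ)+1) * μ^(n-(j:ℕ)) * (-1:ℂ)^m)
        = μ^((j:ℕ)+1) * ((-1:ℂ)^(i:ℕ) * μ^(i:ℕ)) := by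
      rcases Nat.even_or_odd n with he | ho
      · obtain ⟨t, ht⟩ := he
        have hμ1 : μ = 1 := by rw [hμ]; exact Even.neg_one_pow ⟨t, ht⟩
        rw [hμ1]
        simp only [one_pow, one_mul, mul_one]
        exact neg_neg_one_pow_congr _ _ (by omega)
      · obtain ⟨t, ht⟩ := ho
        have hμ1 : μ = -1 := by rw [hμ]; exact Odd.neg_one_pow ⟨t, ht⟩
        rw [hμ1]
        have e : ∀ a b : ℕ, ((-1:ℂ))^a * (-1)^b = (-1)^(a+b) := fun a b => (pow_add _ a b).symm
        rw [e, e, e, e]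
        exact neg_neg_one_pow_congr _ _ (by omega)
    linear_combination (((i:ℕ).choose (n - ((j:ℕ)+1)) : ℂ)) * hsign
  · rw [if_neg h1]
    have hz : (i:ℕ).choose (n - ((j:ℕ)+1)) = 0 := Nat.choose_eq_zero_of_lt (by omega)
    simp [Delta, hz]
lemma RevDelta (n : ℕ) (μ : ℂ) (i j : Fin n) :
    (Rev n * Delta n μ) i j = μ ^ (n - (i:ℕ)) * (-μ)^(j:ℕ) * ((j:ℕ).choose (i:ℕ) : ℂ) := by
  rw [Matrix.mul_apply]
  have h : ∀ k : Fin n, Rev n i k * Delta n μ k j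
      = if k = i.rev then Delta n μ k j else 0 := by
    intro k
    simp only [Rev, Matrix.of_apply, ite_mul, one_mul, zero_mul]
  rw [Finset.sum_congr rfl (fun k _ => h k), Finset.sum_ite_eq' Finset.univ i.rev,
    if_pos (Finset.mem_univ _)]
  simp only [Delta, Matrix.of_apply, Fin.val_rev]
  have hin := i.isLt
  have e1 : (n - ((i:ℕ)+1)) + 1 = n - (i:ℕ) := by omega
  rw [e1]
  have e2 : n - (n - (i:ℕ)) = (i:ℕ) := by omega
  rw [e2]

lemma Delta_det_ne_zero (n : ℕ) (μ : ℂ) (hμ0 : μ ≠ 0) : (Delta n μ).det ≠ 0 := by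
  have htri : (Rev n * Delta n μ).BlockTriangular id := by
    intro i j hij
    rw [RevDelta]
    have : (j:ℕ).choose (i:ℕ) = 0 := Nat.choose_eq_zero_of_lt hij
    simp [this]
  have hdet : (Rev n * Delta n μ).det = ∏ i : Fin n, (Rev n * Delta n μ) i i :=
    Matrix.det_of_upperTriangular htri
  have hne : (Rev n * Delta n μ).det ≠ 0 := by
    rw [hdet]
    apply Finset.prod_ne_zero_iff.mpr
    intro i _
    rw [RevDelta]
    simp only [Nat.choose_self, Nat.cast_one, mul_one]
    exact mul_ne_zero (pow_ne_zero _ hμ0) (pow_ne_zero _ (neg_ne_zero.mpr hμ0))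
  rw [Matrix.det_mul] at hne
  exact right_ne_zero_of_mul hne

/-- `Δ_n` is invertible and `Δ_n⁻¹ · Δ_nᵀ = −J_n(μ)^n` when `μ = (-1)^n`. -/
theorem stmt_5 (n : ℕ) (hn : 1 ≤ n) (μ : ℂ) (hμ : μ = (-1) ^ n) :
    IsUnit (Delta n μ) ∧ (Delta n μ)⁻¹ * (Delta n μ)ᵀ = -((Jmat n μ) ^ n) := by
  have hμ0 : μ ≠ 0 := by rw [hμ]; exact pow_ne_zero _ (by norm_num)
  have hdet : IsUnit (Delta n μ).det :=
    isUnit_iff_ne_zero.mpr (Delta_det_ne_zero n μ hμ0)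
  refine ⟨(Matrix.isUnit_iff_isUnit_det _).mpr hdet, ?_⟩
  rw [← key n hn μ hμ, ← Matrix.mul_assoc, Matrix.nonsing_inv_mul _ hdet, one_mul]
end
end

section
/- Let n ≥ 1 and let μ be a complex number with μ ≠ 0, μ ≠ 1, and μ ≠ −1. Then a 2n×2n complex matrix X satisfies X·H_{2n}(μ) + H_{2n}(μ)·Xᵀ = 0 if and only if X is the block-diagonal matrix (−Dᵀ) ⊕ D for some n×n matrix D that commutes with J_n(μ); that is, X has upper-left block −Dᵀ, lower-right block D, zero off-diagonal blocks, and D·J_n(μ) = J_n(μ)·D. -/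
open Matrix BigOperators Finset

noncomputable section

lemma Jmat_apply (n : ℕ) (μ : ℂ) (i j : Fin n) :
    Jmat n μ i j = if i = j then μ else if (j : ℕ) = (i : ℕ) + 1 then 1 else 0 := rfl

lemma mulJ (n : ℕ) (μ : ℂ) (M : Matrix (Fin n) (Fin n) ℂ) (i j : Fin n) :
    (M * Jmat n μ) i j = μ * M i j +
      (if h : 0 < (j : ℕ) then M i ⟨(j : ℕ) - 1, by omega⟩ else 0) := by
  rw [Matrix.mul_apply]
  by_cases hj : 0 < (j : ℕ)
  · rw [dif_pos hj]
    have hsplit : ∀ l : Fin n, M i l * Jmat n μ l j =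
        (if l = j then μ * M i j else 0) +
        (if l = (⟨(j : ℕ) - 1, by omega⟩ : Fin n) then M i ⟨(j : ℕ) - 1, by omega⟩ else 0) := by
      intro l
      by_cases h1 : l = j
      · have h2 : l ≠ (⟨(j : ℕ) - 1, by omega⟩ : Fin n) := by
          intro hc
          have hv := congrArg Fin.val hc
          have hv2 := congrArg Fin.val h1
          simp only [Fin.val_mk] at hv
          omega
        rw [Jmat_apply, if_pos h1, if_pos h1, if_neg h2, h1, add_zero]
        ring
      · by_cases h2 : l = (⟨(j : ℕ) - 1, by omega⟩ : Fin n)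
        · have h3 : (j : ℕ) = (l : ℕ) + 1 := by
            have := congrArg Fin.val h2; simp at this; omega
          rw [Jmat_apply, if_neg h1, if_pos h3, if_neg h1, if_pos h2, mul_one, h2, zero_add]
        · have h3 : ¬ ((j : ℕ) = (l : ℕ) + 1) := by
            intro hc
            exact h2 (Fin.ext (by simp; omega))
          rw [Jmat_apply, if_neg h1, if_neg h3, mul_zero, if_neg h1, if_neg h2, add_zero]
    rw [Finset.sum_congr rfl fun l _ => hsplit l, Finset.sum_add_distrib,
      Finset.sum_ite_eq', Finset.sum_ite_eq']
    simp
  · rw [dif_neg hj]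
    have hsplit : ∀ l : Fin n, M i l * Jmat n μ l j = if l = j then μ * M i j else 0 := by
      intro l
      by_cases h1 : l = j
      · rw [Jmat_apply, if_pos h1, if_pos h1, h1]; ring
      · have h3 : ¬ ((j : ℕ) = (l : ℕ) + 1) := by omega
        rw [Jmat_apply, if_neg h1, if_neg h3, mul_zero, if_neg h1]
    rw [Finset.sum_congr rfl fun l _ => hsplit l, Finset.sum_ite_eq']
    simp

lemma Jmul (n : ℕ) (μ : ℂ) (M : Matrix (Fin n) (Fin n) ℂ) (i j : Fin n) :
    (Jmat n μ * M) i j = μ * M i j +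
      (if h : (i : ℕ) + 1 < n then M ⟨(i : ℕ) + 1, h⟩ j else 0) := by
  rw [Matrix.mul_apply]
  by_cases hi : (i : ℕ) + 1 < n
  · rw [dif_pos hi]
    have hsplit : ∀ k : Fin n, Jmat n μ i k * M k j =
        (if k = i then μ * M i j else 0) +
        (if k = (⟨(i : ℕ) + 1, hi⟩ : Fin n) then M ⟨(i : ℕ) + 1, hi⟩ j else 0) := by
      intro k
      by_cases h1 : k = i
      · have h2 : k ≠ (⟨(i : ℕ) + 1, hi⟩ : Fin n) := by
          intro hc
          have hv := congrArg Fin.val hc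
          have hv2 := congrArg Fin.val h1
          simp only [Fin.val_mk] at hv
          omega
        rw [Jmat_apply, if_pos h1.symm, if_pos h1, if_neg h2, h1, add_zero]
      · by_cases h2 : k = (⟨(i : ℕ) + 1, hi⟩ : Fin n)
        · have h3 : (k : ℕ) = (i : ℕ) + 1 := by
            have := congrArg Fin.val h2; simpa using this
          rw [Jmat_apply, if_neg (fun hc => h1 hc.symm), if_pos h3, one_mul,
            if_neg h1, if_pos h2, h2, zero_add]
        · have h3 : ¬ ((k : ℕ) = (i : ℕ) + 1) := by
            intro hc
            exact h2 (Fin.ext (by simpa using hc))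
          rw [Jmat_apply, if_neg (fun hc => h1 hc.symm), if_neg h3, zero_mul,
            if_neg h1, if_neg h2, add_zero]
    rw [Finset.sum_congr rfl fun l _ => hsplit l, Finset.sum_add_distrib,
      Finset.sum_ite_eq', Finset.sum_ite_eq']
    simp
  · rw [dif_neg hi]
    have hsplit : ∀ k : Fin n, Jmat n μ i k * M k j = if k = i then μ * M i j else 0 := by
      intro k
      by_cases h1 : k = i
      · rw [Jmat_apply, if_pos h1.symm, if_pos h1, h1]
      · have h3 : ¬ ((k : ℕ) = (i : ℕ) + 1) := by
          intro hc
          exact hi (hc ▸ k.2)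
        rw [Jmat_apply, if_neg (fun hc => h1 hc.symm), if_neg h3, zero_mul, if_neg h1]
    rw [Finset.sum_congr rfl fun l _ => hsplit l, Finset.sum_ite_eq']
    simp

lemma Jtmul (n : ℕ) (μ : ℂ) (M : Matrix (Fin n) (Fin n) ℂ) (i j : Fin n) :
    ((Jmat n μ)ᵀ * M) i j = μ * M i j +
      (if h : 0 < (i : ℕ) then M ⟨(i : ℕ) - 1, by omega⟩ j else 0) := by
  have h1 : (Jmat n μ)ᵀ * M = (Mᵀ * Jmat n μ)ᵀ := by
    rw [Matrix.transpose_mul, Matrix.transpose_transpose]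
  rw [h1, Matrix.transpose_apply, mulJ]
  simp [Matrix.transpose_apply]

lemma mulJt (n : ℕ) (μ : ℂ) (M : Matrix (Fin n) (Fin n) ℂ) (i j : Fin n) :
    (M * (Jmat n μ)ᵀ) i j = μ * M i j +
      (if h : (j : ℕ) + 1 < n then M i ⟨(j : ℕ) + 1, h⟩ else 0) := by
  have h1 : M * (Jmat n μ)ᵀ = (Jmat n μ * Mᵀ)ᵀ := by
    rw [Matrix.transpose_mul, Matrix.transpose_transpose]
  rw [h1, Matrix.transpose_apply, Jmul]
  simp [Matrix.transpose_apply]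

lemma key1 (n : ℕ) (μ : ℂ) (hμ : μ ^ 2 ≠ 1) (M : Matrix (Fin n) (Fin n) ℂ)
    (h : (Jmat n μ)ᵀ * M * Jmat n μ = M) : M = 0 := by
  have hne : μ ^ 2 - 1 ≠ 0 := sub_ne_zero.mpr hμ
  have key : ∀ k : ℕ, ∀ i j : Fin n, (i : ℕ) + (j : ℕ) = k → M i j = 0 := by
    intro k
    induction k using Nat.strong_induction_on with
    | _ k ih =>
      intro i j hk
      have h' : ((Jmat n μ)ᵀ * M * Jmat n μ) i j = M i j := by rw [h]
      rw [mulJ, Jtmul] at h'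
      by_cases hi : 0 < (i : ℕ) <;> by_cases hj : 0 < (j : ℕ)
      · rw [dif_pos hi, dif_pos hj, Jtmul, dif_pos hi] at h'
        rw [ih ((i:ℕ)-1+(j:ℕ)) (by omega) ⟨(i:ℕ)-1, by omega⟩ j rfl,
          ih ((i:ℕ)+((j:ℕ)-1)) (by omega) i ⟨(j:ℕ)-1, by omega⟩ rfl,
          ih ((i:ℕ)-1+((j:ℕ)-1)) (by omega) ⟨(i:ℕ)-1, by omega⟩ ⟨(j:ℕ)-1, by omega⟩ rfl] at h'
        have hz : (μ ^ 2 - 1) * M i j = 0 := by linear_combination h'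
        exact (mul_eq_zero.mp hz).resolve_left hne
      · rw [dif_pos hi, dif_neg hj] at h'
        rw [ih ((i:ℕ)-1+(j:ℕ)) (by omega) ⟨(i:ℕ)-1, by omega⟩ j rfl] at h'
        have hz : (μ ^ 2 - 1) * M i j = 0 := by linear_combination h'
        exact (mul_eq_zero.mp hz).resolve_left hne
      · rw [dif_neg hi, dif_pos hj, Jtmul, dif_neg hi] at h'
        rw [ih ((i:ℕ)+((j:ℕ)-1)) (by omega) i ⟨(j:ℕ)-1, by omega⟩ rfl] at h'
        have hz : (μ ^ 2 - 1) * M i j = 0 := by linear_combination h'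
        exact (mul_eq_zero.mp hz).resolve_left hne
      · rw [dif_neg hi, dif_neg hj] at h'
        have hz : (μ ^ 2 - 1) * M i j = 0 := by linear_combination h'
        exact (mul_eq_zero.mp hz).resolve_left hne
  ext i j
  simpa using key ((i : ℕ) + (j : ℕ)) i j rfl

lemma key2 (n : ℕ) (μ : ℂ) (hμ : μ ^ 2 ≠ 1) (M : Matrix (Fin n) (Fin n) ℂ)
    (h : Jmat n μ * M * (Jmat n μ)ᵀ = M) : M = 0 := by
  have hne : μ ^ 2 - 1 ≠ 0 := sub_ne_zero.mpr hμ
  have key : ∀ k : ℕ, ∀ i j : Fin n, (n - (i : ℕ)) + (n - (j : ℕ)) = k → M i j = 0 := by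
    intro k
    induction k using Nat.strong_induction_on with
    | _ k ih =>
      intro i j hk
      have hi' := i.2
      have hj' := j.2
      have h' : (Jmat n μ * M * (Jmat n μ)ᵀ) i j = M i j := by rw [h]
      rw [mulJt, Jmul] at h'
      by_cases hi : (i : ℕ) + 1 < n <;> by_cases hj : (j : ℕ) + 1 < n
      · rw [dif_pos hi, dif_pos hj, Jmul, dif_pos hi] at h'
        rw [ih ((n-((i:ℕ)+1))+(n-(j:ℕ))) (by omega) ⟨(i:ℕ)+1, by omega⟩ j rfl,
          ih ((n-(i:ℕ))+(n-((j:ℕ)+1))) (by omega) i ⟨(j:ℕ)+1, by omega⟩ rfl,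
          ih ((n-((i:ℕ)+1))+(n-((j:ℕ)+1))) (by omega) ⟨(i:ℕ)+1, by omega⟩ ⟨(j:ℕ)+1, by omega⟩ rfl] at h'
        have hz : (μ ^ 2 - 1) * M i j = 0 := by linear_combination h'
        exact (mul_eq_zero.mp hz).resolve_left hne
      · rw [dif_pos hi, dif_neg hj] at h'
        rw [ih ((n-((i:ℕ)+1))+(n-(j:ℕ))) (by omega) ⟨(i:ℕ)+1, by omega⟩ j rfl] at h'
        have hz : (μ ^ 2 - 1) * M i j = 0 := by linear_combination h'
        exact (mul_eq_zero.mp hz).resolve_left hne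
      · rw [dif_neg hi, dif_pos hj, Jmul, dif_neg hi] at h'
        rw [ih ((n-(i:ℕ))+(n-((j:ℕ)+1))) (by omega) i ⟨(j:ℕ)+1, by omega⟩ rfl] at h'
        have hz : (μ ^ 2 - 1) * M i j = 0 := by linear_combination h'
        exact (mul_eq_zero.mp hz).resolve_left hne
      · rw [dif_neg hi, dif_neg hj] at h'
        have hz : (μ ^ 2 - 1) * M i j = 0 := by linear_combination h'
        exact (mul_eq_zero.mp hz).resolve_left hne
  ext i j
  simpa using key ((n - (i : ℕ)) + (n - (j : ℕ))) i j rfl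

/-- for `μ ∉ {0, 1, −1}`, the solutions of `X·H + H·Xᵀ = 0` are exactly the
matrices `(−Dᵀ) ⊕ D` where `D` commutes with `J_n(μ)`. -/
theorem stmt_9 (n : ℕ) (hn : 1 ≤ n) (μ : ℂ) (hμ0 : μ ≠ 0) (hμ1 : μ ≠ 1) (hμ2 : μ ≠ -1)
    (X : Matrix (Fin n ⊕ Fin n) (Fin n ⊕ Fin n) ℂ) :
    X * Hmat n μ + Hmat n μ * Xᵀ = 0 ↔
      ∃ D : Matrix (Fin n) (Fin n) ℂ,
        D * Jmat n μ = Jmat n μ * D ∧ X = Matrix.fromBlocks (-Dᵀ) 0 0 D := by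
  have hμsq : μ ^ 2 ≠ 1 := by
    intro hsq
    have hfac : (μ - 1) * (μ + 1) = 0 := by linear_combination hsq
    rcases mul_eq_zero.mp hfac with h | h
    · exact hμ1 (by linear_combination h)
    · exact hμ2 (by linear_combination h)
  set J := Jmat n μ with hJ
  constructor
  · intro h
    obtain ⟨A, B, C, D, rfl⟩ : ∃ A B C D, X = Matrix.fromBlocks A B C D :=
      ⟨_, _, _, _, (Matrix.fromBlocks_toBlocks X).symm⟩
    rw [Hmat, Matrix.fromBlocks_transpose, Matrix.fromBlocks_multiply,
      Matrix.fromBlocks_multiply, Matrix.fromBlocks_add] at h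
    rw [← Matrix.fromBlocks_zero, Matrix.fromBlocks_inj] at h
    obtain ⟨h11, h12, h21, h22⟩ := h
    simp only [Matrix.mul_zero, Matrix.mul_one, Matrix.zero_mul, Matrix.one_mul,
      zero_add, add_zero] at h11 h12 h21 h22
    -- h11 : B * J + Bᵀ = 0, h12 : A + Dᵀ = 0, h21 : D * J + J * Aᵀ = 0, h22 : C + J * Cᵀ = 0
    have hA : A = -Dᵀ := eq_neg_of_add_eq_zero_left h12
    have hBJ : B * J = -Bᵀ := eq_neg_of_add_eq_zero_left h11
    have hB : B = 0 := by
      apply key1 n μ hμsq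
      calc Jᵀ * B * J = Jᵀ * (B * J) := by rw [Matrix.mul_assoc]
        _ = -(Jᵀ * Bᵀ) := by rw [hBJ, Matrix.mul_neg]
        _ = -((B * J)ᵀ) := by rw [Matrix.transpose_mul]
        _ = -((-Bᵀ)ᵀ) := by rw [hBJ]
        _ = B := by simp
    have hJC : J * Cᵀ = -C := eq_neg_of_add_eq_zero_right h22
    have hCJt : C * Jᵀ = -Cᵀ := by
      have := congrArg Matrix.transpose h22
      simp only [Matrix.transpose_add, Matrix.transpose_mul, Matrix.transpose_transpose,
        Matrix.transpose_zero] at this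
      exact eq_neg_of_add_eq_zero_right this
    have hC : C = 0 := by
      apply key2 n μ hμsq
      calc J * C * Jᵀ = J * (C * Jᵀ) := by rw [Matrix.mul_assoc]
        _ = -(J * Cᵀ) := by rw [hCJt, Matrix.mul_neg]
        _ = C := by rw [hJC, neg_neg]
    have hDJ : D * J = J * D := by
      have hAt : Aᵀ = -D := by rw [hA]; simp
      have := h21
      rw [hAt, Matrix.mul_neg] at this
      have := eq_neg_of_add_eq_zero_left this
      rwa [neg_neg] at this
    exact ⟨D, hDJ, by rw [hA, hB, hC]⟩
  · rintro ⟨D, hD, rfl⟩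
    rw [Hmat, Matrix.fromBlocks_transpose, Matrix.fromBlocks_multiply,
      Matrix.fromBlocks_multiply, Matrix.fromBlocks_add, ← Matrix.fromBlocks_zero]
    congr 1 <;> simp [← hJ, hD]
end
end
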